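/- Assume W*V = I_S, f_s is continuous, and there is L ≥ 0 with ‖f_s(t,a) − f_s(t,b)‖ ≤ L‖a − b‖ for all t ∈ ℝ and a, b ∈ ℂ^S. Let y_n ∈ ℂ^N, t_n ∈ ℝ, H > 0, abscissae c_1,…,c_s ∈ ℝ, stage vectors Y_1,…,Y_s ∈ ℂ^N, Runge–Kutta weights b_1,…,b_s ∈ ℝ, and real polynomials γ_1,…,γ_s with γ̄_j := ∫₀¹ γ_j(τ) dτ = b_j for every j. Suppose: (i) v : [0,H] → ℂ^N satisfies v(0) = y_n and v'(θ) = V f_s(t_n + θ, W* v(θ)) + Σ_{j=1}^{s} γ_j(θ/H) ( f(t_n + c_j H, Y_j) − V f_s(t_n + c_j H, W* Y_j) ) for θ ∈ [0,H]; and (ii) z : [0,H] → ℂ^S satisfies z(0) = W* y_n and z'(θ) = f_s(t_n + θ, z(θ)) + Σ_{j=1}^{s} γ_j(θ/H) ( W* f(t_n + c_j H, Y_j) − f_s(t_n + c_j H, W* Y_j) ) for θ ∈ [0,H]. Then v(H) = V z(H) + (I_N − V W*) ( y_n + H Σ_{j=1}^{s} b_j f(t_n + c_j H, Y_j) ); that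 is, the SM-SPC-MRI-GARK corrector of Definition 3.3, solving only an S-dimensional ODE, reproduces the exact endpoint of the N-dimensional SPC-MRI-GARK corrector applied to the partitioned system y' = V f_s(t, W*y) + ( f(t,y) − V f_s(t, W*y) ). -/

import Mathlib

open Matrix

/-- If `W* V = I_S`, `f_s` is continuous and `L`-Lipschitz in its second
argument, the coupling polynomials satisfy `γ̄_j = ∫₀¹ γ_j(τ) dτ = b_j`, `v` solves the
N-dimensional SPC-MRI-GARK corrector ODE with `v(0) = y_n`, and `z` solves the
S-dimensional corrector ODE with `z(0) = W* y_n`, then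
`v(H) = V z(H) + (I − V W*) (y_n + H Σ_j b_j f(t_n + c_j H, Y_j))`: the
SM-SPC-MRI-GARK corrector reproduces the exact endpoint of the N-dimensional
SPC-MRI-GARK corrector for the partitioned system. -/
theorem sm_spc_mri_gark_corrector_equivalence (N S : ℕ) (hN : 0 < N) (hS : 0 < S)
    (V W : Matrix (Fin N) (Fin S) ℂ) (hVW : Wᴴ * V = 1)
    (f : ℝ → (Fin N → ℂ) → (Fin N → ℂ))
    (fs : ℝ → (Fin S → ℂ) → (Fin S → ℂ))
    (hfs : Continuous fun p : ℝ × (Fin S → ℂ) => fs p.1 p.2)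
    (L : ℝ) (hL : 0 ≤ L)
    (hlip : ∀ (t : ℝ) (a b : Fin S → ℂ), ‖fs t a - fs t b‖ ≤ L * ‖a - b‖)
    (yn : Fin N → ℂ) (tn : ℝ) (H : ℝ) (hH : 0 < H) (s : ℕ)
    (c : Fin s → ℝ) (Y : Fin s → (Fin N → ℂ)) (b : Fin s → ℝ)
    (γ : Fin s → Polynomial ℝ)
    (hγb : ∀ j, (∫ τ in (0:ℝ)..1, (γ j).eval τ) = b j)
    (v : ℝ → (Fin N → ℂ)) (hv0 : v 0 = yn)
    (hv : ∀ θ ∈ Set.Icc (0:ℝ) H,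
      HasDerivAt v
        (V.mulVec (fs (tn + θ) (Wᴴ.mulVec (v θ))) +
          ∑ j, ((γ j).eval (θ / H)) •
            (f (tn + c j * H) (Y j) -
              V.mulVec (fs (tn + c j * H) (Wᴴ.mulVec (Y j))))) θ)
    (z : ℝ → (Fin S → ℂ)) (hz0 : z 0 = Wᴴ.mulVec yn)
    (hz : ∀ θ ∈ Set.Icc (0:ℝ) H,
      HasDerivAt z
        (fs (tn + θ) (z θ) +
          ∑ j, ((γ j).eval (θ / H)) •
            (Wᴴ.mulVec (f (tn + c j * H) (Y j)) -
              fs (tn + c j * H) (Wᴴ.mulVec (Y j)))) θ) :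
    v H =
      V.mulVec (z H) +
        ((yn + H • ∑ j, b j • f (tn + c j * H) (Y j)) -
          (V * Wᴴ).mulVec (yn + H • ∑ j, b j • f (tn + c j * H) (Y j))) := by
  classical
  have hHne : H ≠ 0 := ne_of_gt hH
  -- ℝ-continuous-linear version of `Wᴴ.mulVec`
  let LW : (Fin N → ℂ) →L[ℝ] (Fin S → ℂ) :=
    (LinearMap.toContinuousLinearMap (Matrix.mulVecLin Wᴴ)).restrictScalars ℝ
  have hLW : ∀ x, LW x = Wᴴ.mulVec x := fun x => rfl
  -- ℝ-continuous-linear version of `V.mulVec`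
  let LV : (Fin S → ℂ) →L[ℝ] (Fin N → ℂ) :=
    (LinearMap.toContinuousLinearMap (Matrix.mulVecLin V)).restrictScalars ℝ
  have hLV : ∀ x, LV x = V.mulVec x := fun x => rfl
  set w : ℝ → (Fin S → ℂ) := fun θ => Wᴴ.mulVec (v θ) with hw
  -- the S-dimensional vector field
  set F : ℝ → (Fin S → ℂ) → (Fin S → ℂ) := fun θ x =>
    fs (tn + θ) x +
      ∑ j, ((γ j).eval (θ / H)) •
        (Wᴴ.mulVec (f (tn + c j * H) (Y j)) -
          fs (tn + c j * H) (Wᴴ.mulVec (Y j))) with hF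
  have hw' : ∀ θ ∈ Set.Icc (0:ℝ) H, HasDerivAt w (F θ (w θ)) θ := by
    intro θ hθ
    have h1 : HasDerivAt w (LW (V.mulVec (fs (tn + θ) (Wᴴ.mulVec (v θ))) +
          ∑ j, ((γ j).eval (θ / H)) •
            (f (tn + c j * H) (Y j) -
              V.mulVec (fs (tn + c j * H) (Wᴴ.mulVec (Y j)))))) θ :=
      (LW.hasFDerivAt (x := v θ)).comp_hasDerivAt θ (hv θ hθ)
    convert h1 using 1
    simp only [map_add, map_sum, _root_.map_smul, map_sub]
    simp only [hF, hw, hLW, Matrix.mulVec_mulVec, hVW, Matrix.one_mulVec]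
  have hz' : ∀ θ ∈ Set.Icc (0:ℝ) H, HasDerivAt z (F θ (z θ)) θ := fun θ hθ => hz θ hθ
  -- uniqueness of the S-dimensional ODE solution : w = z on [0, H]
  have hlipF : ∀ t : ℝ, LipschitzWith L.toNNReal (F t) := by
    intro t
    apply LipschitzWith.of_dist_le_mul
    intro a b'
    simp only [hF, dist_eq_norm, add_sub_add_right_eq_sub]
    calc ‖fs (tn + t) a - fs (tn + t) b'‖ ≤ L * ‖a - b'‖ := hlip _ a b'
      _ = (L.toNNReal : ℝ) * ‖a - b'‖ := by rw [Real.coe_toNNReal L hL]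
  have key : Set.EqOn w z (Set.Icc 0 H) := by
    refine ODE_solution_unique hlipF ?_ ?_ ?_ ?_ ?_
    · exact fun θ hθ => ((hw' θ hθ).continuousAt).continuousWithinAt
    · exact fun θ hθ => ((hw' θ (Set.mem_Icc_of_Ico hθ)).hasDerivWithinAt)
    · exact fun θ hθ => ((hz' θ hθ).continuousAt).continuousWithinAt
    · exact fun θ hθ => ((hz' θ (Set.mem_Icc_of_Ico hθ)).hasDerivWithinAt)
    · simp [hw, hv0, hz0]
  -- the difference function and its derivative
  set d : Fin s → (Fin N → ℂ) := fun j =>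
    f (tn + c j * H) (Y j) - (V * Wᴴ).mulVec (f (tn + c j * H) (Y j)) with hd
  set g : ℝ → (Fin N → ℂ) := fun θ => v θ - LV (z θ) with hg
  have hg' : ∀ θ ∈ Set.Icc (0:ℝ) H,
      HasDerivAt g (∑ j, ((γ j).eval (θ / H)) • d j) θ := by
    intro θ hθ
    have h1 : HasDerivAt g ((V.mulVec (fs (tn + θ) (Wᴴ.mulVec (v θ))) +
          ∑ j, ((γ j).eval (θ / H)) •
            (f (tn + c j * H) (Y j) -
              V.mulVec (fs (tn + c j * H) (Wᴴ.mulVec (Y j))))) -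
        LV (fs (tn + θ) (z θ) +
          ∑ j, ((γ j).eval (θ / H)) •
            (Wᴴ.mulVec (f (tn + c j * H) (Y j)) -
              fs (tn + c j * H) (Wᴴ.mulVec (Y j))))) θ :=
      (hv θ hθ).sub ((LV.hasFDerivAt (x := z θ)).comp_hasDerivAt θ (hz θ hθ))
    convert h1 using 1
    have hwz : Wᴴ.mulVec (v θ) = z θ := key hθ
    simp only [map_add, map_sum, _root_.map_smul, map_sub]
    simp only [hLV, hwz]
    rw [add_sub_add_comm, sub_self, zero_add, ← Finset.sum_sub_distrib]
    refine Finset.sum_congr rfl fun j _ => ?_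
    rw [hd, ← smul_sub]
    congr 1
    simp only [Matrix.mulVec_mulVec]
    abel
  -- fundamental theorem of calculus
  have hcont : ∀ j : Fin s, Continuous fun θ : ℝ => ((γ j).eval (θ / H)) • d j := by
    intro j
    exact ((γ j).continuous_aeval.comp (continuous_id.div_const H)).smul continuous_const
  have hFTC : (∫ θ in (0:ℝ)..H, ∑ j, ((γ j).eval (θ / H)) • d j) = g H - g 0 := by
    refine intervalIntegral.integral_eq_sub_of_hasDerivAt
      (fun θ hθ => hg' θ (by rwa [Set.uIcc_of_le hH.le] at hθ)) ?_
    exact (continuous_finset_sum _ fun j _ => hcont j).intervalIntegrable 0 H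
  have hI : (∫ θ in (0:ℝ)..H, ∑ j, ((γ j).eval (θ / H)) • d j)
      = ∑ j, (H * b j) • d j := by
    rw [intervalIntegral.integral_finset_sum
      (fun j _ => (hcont j).intervalIntegrable 0 H)]
    refine Finset.sum_congr rfl fun j _ => ?_
    rw [intervalIntegral.integral_smul_const]
    congr 1
    rw [intervalIntegral.integral_comp_div (fun τ => (γ j).eval τ) hHne]
    rw [zero_div, div_self hHne, hγb j, smul_eq_mul]
  -- assemble
  have hg0 : g 0 = yn - (V * Wᴴ).mulVec yn := by
    simp [hg, hLV, hv0, hz0, Matrix.mulVec_mulVec]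
  have hvH : v H = V.mulVec (z H) + (yn - (V * Wᴴ).mulVec yn) + ∑ j, (H * b j) • d j := by
    have h3 : g H = g 0 + ∑ j, (H * b j) • d j := by
      rw [← hI, hFTC]; abel
    have h4 : g H = v H - V.mulVec (z H) := by simp [hg, hLV]
    rw [hg0] at h3
    rw [h4] at h3
    rw [sub_eq_iff_eq_add] at h3
    rw [h3]; abel
  rw [hvH]
  have mulVec_sum : ∀ (t : Finset (Fin s)) (u : Fin s → (Fin N → ℂ)),
      (V * Wᴴ).mulVec (∑ j ∈ t, u j) = ∑ j ∈ t, (V * Wᴴ).mulVec (u j) := by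
    intro t u
    induction t using Finset.induction with
    | empty => simp
    | insert _ _ h ih => rw [Finset.sum_insert h, Finset.sum_insert h, Matrix.mulVec_add, ih]
  have expand : (V * Wᴴ).mulVec (yn + H • ∑ j, b j • f (tn + c j * H) (Y j))
      = (V * Wᴴ).mulVec yn + ∑ j, (H * b j) • (V * Wᴴ).mulVec (f (tn + c j * H) (Y j)) := by
    rw [Matrix.mulVec_add, Matrix.mulVec_smul, mulVec_sum]
    congr 1
    rw [Finset.smul_sum]
    refine Finset.sum_congr rfl fun j _ => ?_
    rw [Matrix.mulVec_smul, smul_smul]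
  have hsum : H • ∑ j, b j • f (tn + c j * H) (Y j)
      = ∑ j, (H * b j) • f (tn + c j * H) (Y j) := by
    rw [Finset.smul_sum]
    exact Finset.sum_congr rfl fun j _ => (smul_smul H (b j) _)
  rw [expand]
  simp only [hd, smul_sub, Finset.sum_sub_distrib, hsum]
  abel
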